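/- Let A ∈ ℝ^{m×n}, U ∈ ℝ^{m×r} with UᵀU = I_r, V ∈ ℝ^{r×n} and Q ∈ ℝ^{s×n} with VVᵀ = I_r, QQᵀ = I_s, VQᵀ = 0, S ∈ ℝ^{r×r}, E ∈ ℝ^{m×n} with A = U S V + E and UᵀE = 0, and B = P V + L Q ∈ ℝ^{p×n}. Let S′ = [[S, 0], [P, L]] ∈ ℝ^{(r+p)×(r+s)} and suppose S′ = U′ S̃ V′ + E′. Define Ũ = blkdiag(U, I_p)·U′, Ṽ = V′·[V; Q], and Ã = [A; B]. If ‖E‖_F ≤ ε‖A‖_F and ‖E′‖_F ≤ ε‖B‖_F for some ε ≥ 0, then ‖Ã − Ũ S̃ Ṽ‖_F ≤ ε‖Ã‖_F. -/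

import Mathlib

open Matrix BigOperators

/-- Squared Frobenius norm of a real matrix. -/
noncomputable def frobSq {m n : Type*} [Fintype m] [Fintype n] (M : Matrix m n ℝ) : ℝ :=
  ∑ i, ∑ j, (M i j) ^ 2

/-- Frobenius norm of a real matrix. -/
noncomputable def frob {m n : Type*} [Fintype m] [Fintype n] (M : Matrix m n ℝ) : ℝ :=
  Real.sqrt (frobSq M)

lemma frobSq_eq_trace {m n : Type*} [Fintype m] [Fintype n] (M : Matrix m n ℝ) :
    frobSq M = (Mᵀ * M).trace := by
  simp only [frobSq, Matrix.trace, Matrix.diag, Matrix.mul_apply, Matrix.transpose_apply, sq]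
  exact Finset.sum_comm

lemma frobSq_eq_trace' {m n : Type*} [Fintype m] [Fintype n] (M : Matrix m n ℝ) :
    frobSq M = (M * Mᵀ).trace := by
  rw [frobSq_eq_trace, Matrix.trace_mul_comm]

lemma frobSq_nonneg {m n : Type*} [Fintype m] [Fintype n] (M : Matrix m n ℝ) :
    0 ≤ frobSq M := by
  refine Finset.sum_nonneg fun i _ => Finset.sum_nonneg fun j _ => sq_nonneg _

lemma frob_nonneg {m n : Type*} [Fintype m] [Fintype n] (M : Matrix m n ℝ) :
    0 ≤ frob M := Real.sqrt_nonneg _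

lemma sq_frob {m n : Type*} [Fintype m] [Fintype n] (M : Matrix m n ℝ) :
    frob M ^ 2 = frobSq M := Real.sq_sqrt (frobSq_nonneg M)

lemma frobSq_add_of_cross {m n : Type*} [Fintype m] [Fintype n]
    (X Y : Matrix m n ℝ) (h : (Xᵀ * Y).trace = 0) :
    frobSq (X + Y) = frobSq X + frobSq Y := by
  have h2 : (Yᵀ * X).trace = 0 := by
    calc (Yᵀ * X).trace = ((Yᵀ * X)ᵀ).trace := (Matrix.trace_transpose _).symm
    _ = (Xᵀ * Y).trace := by rw [Matrix.transpose_mul, Matrix.transpose_transpose]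
    _ = 0 := h
  rw [frobSq_eq_trace, frobSq_eq_trace, frobSq_eq_trace]
  simp [Matrix.transpose_add, Matrix.add_mul, Matrix.mul_add, Matrix.trace_add, h, h2]

lemma frobSq_fromRows {m₁ m₂ n : Type*} [Fintype m₁] [Fintype m₂] [Fintype n]
    (X : Matrix m₁ n ℝ) (Y : Matrix m₂ n ℝ) :
    frobSq (Matrix.fromRows X Y) = frobSq X + frobSq Y := by
  simp [frobSq, Fintype.sum_sum_type]

lemma frobSq_zero {m n : Type*} [Fintype m] [Fintype n] :
    frobSq (0 : Matrix m n ℝ) = 0 := by simp [frobSq]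

lemma frobSq_mul_left {k m n : Type*} [Fintype k] [Fintype m] [Fintype n] [DecidableEq m]
    (Uo : Matrix k m ℝ) (N : Matrix m n ℝ) (h : Uoᵀ * Uo = 1) :
    frobSq (Uo * N) = frobSq N := by
  rw [frobSq_eq_trace, Matrix.transpose_mul, Matrix.mul_assoc,
    ← Matrix.mul_assoc Uoᵀ, h, Matrix.one_mul, ← frobSq_eq_trace]

lemma frobSq_mul_right {k m n : Type*} [Fintype k] [Fintype m] [Fintype n] [DecidableEq n]
    (N : Matrix m n ℝ) (Wo : Matrix n k ℝ) (h : Wo * Woᵀ = 1) :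
    frobSq (N * Wo) = frobSq N := by
  rw [frobSq_eq_trace', Matrix.transpose_mul, ← Matrix.mul_assoc,
    Matrix.mul_assoc N, h, Matrix.mul_one, ← frobSq_eq_trace']

lemma fromRows_sub {m₁ m₂ n : Type*} (X₁ X₂ : Matrix m₁ n ℝ) (Y₁ Y₂ : Matrix m₂ n ℝ) :
    Matrix.fromRows X₁ Y₁ - Matrix.fromRows X₂ Y₂ = Matrix.fromRows (X₁ - X₂) (Y₁ - Y₂) := by
  ext (i | i) j <;> simp

/-- Relative-error guarantee of the incremental SVD update. -/
theorem incremental_svd_relative_error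
    {m n r s p rt : ℕ}
    (A E : Matrix (Fin m) (Fin n) ℝ)
    (U : Matrix (Fin m) (Fin r) ℝ)
    (V : Matrix (Fin r) (Fin n) ℝ)
    (Q : Matrix (Fin s) (Fin n) ℝ)
    (S : Matrix (Fin r) (Fin r) ℝ)
    (B : Matrix (Fin p) (Fin n) ℝ)
    (P : Matrix (Fin p) (Fin r) ℝ)
    (L : Matrix (Fin p) (Fin s) ℝ)
    (U' : Matrix (Fin r ⊕ Fin p) (Fin rt) ℝ)
    (St : Matrix (Fin rt) (Fin rt) ℝ)
    (V' : Matrix (Fin rt) (Fin r ⊕ Fin s) ℝ)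
    (E' : Matrix (Fin r ⊕ Fin p) (Fin r ⊕ Fin s) ℝ)
    (hU : Uᵀ * U = 1)
    (hV : V * Vᵀ = 1)
    (hQ : Q * Qᵀ = 1)
    (hVQ : V * Qᵀ = 0)
    (hA : A = U * S * V + E)
    (hUE : Uᵀ * E = 0)
    (hB : B = P * V + L * Q)
    (hS' : Matrix.fromBlocks S 0 P L = U' * St * V' + E')
    (ε : ℝ) (hε : 0 ≤ ε)
    (hE : frob E ≤ ε * frob A)
    (hE' : frob E' ≤ ε * frob B) :
    frob (Matrix.fromRows A B -
        Matrix.fromBlocks U 0 0 (1 : Matrix (Fin p) (Fin p) ℝ) * U' * St *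
          (V' * Matrix.fromRows V Q)) ≤
      ε * frob (Matrix.fromRows A B) := by
  set W := Matrix.fromRows V Q with hWdef
  set Ub := Matrix.fromBlocks U 0 0 (1 : Matrix (Fin p) (Fin p) ℝ) with hUbdef
  have hQV : Q * Vᵀ = 0 := by
    have := congrArg Matrix.transpose hVQ
    simpa using this
  have hEU : Eᵀ * U = 0 := by
    have := congrArg Matrix.transpose hUE
    simpa using this
  have hW : W * Wᵀ = 1 := by
    rw [hWdef, Matrix.transpose_fromRows, Matrix.fromRows_mul_fromCols,
      hV, hQ, hVQ, hQV, Matrix.fromBlocks_one]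
  have hUb : Ubᵀ * Ub = 1 := by
    rw [hUbdef, Matrix.fromBlocks_transpose, Matrix.fromBlocks_multiply]
    simp [hU, Matrix.fromBlocks_one]
  have hUSV : U * S * V = A - E := eq_sub_of_add_eq hA.symm
  have hE'eq : U' * St * V' = Matrix.fromBlocks S 0 P L - E' := eq_sub_of_add_eq hS'.symm
  have hUbS'W : Ub * Matrix.fromBlocks S 0 P L * W = Matrix.fromRows (A - E) B := by
    rw [hUbdef, Matrix.fromBlocks_multiply, hWdef, Matrix.fromBlocks_mul_fromRows]
    simp [hUSV, hB]
  have hD : Matrix.fromRows A B - Ub * U' * St * (V' * W) =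
      Matrix.fromRows E 0 + Ub * (E' * W) := by
    have hassoc : Ub * U' * St * (V' * W) = Ub * (U' * St * V') * W := by
      simp only [Matrix.mul_assoc]
    rw [hassoc, hE'eq, Matrix.mul_sub, Matrix.sub_mul, hUbS'W, sub_sub_eq_add_sub,
      sub_eq_iff_eq_add]
    ext (i | i) j <;>
      simp [Matrix.mul_assoc, Matrix.add_apply, Matrix.sub_apply] <;> ring
  rw [hD]
  -- cross term vanishes
  set e11 := E'.toBlocks₁₁
  set e12 := E'.toBlocks₁₂
  set e21 := E'.toBlocks₂₁
  set e22 := E'.toBlocks₂₂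
  have hE'blocks : E' = Matrix.fromBlocks e11 e12 e21 e22 := (Matrix.fromBlocks_toBlocks E').symm
  have hEW : E' * W = Matrix.fromRows (e11 * V + e12 * Q) (e21 * V + e22 * Q) := by
    rw [hE'blocks, hWdef, Matrix.fromBlocks_mul_fromRows]
  have hUbEW : Ub * (E' * W) =
      Matrix.fromRows (U * (e11 * V + e12 * Q)) (e21 * V + e22 * Q) := by
    rw [hEW, hUbdef, Matrix.fromBlocks_mul_fromRows]
    simp
  have hcross : ((Matrix.fromRows E (0 : Matrix (Fin p) (Fin n) ℝ))ᵀ *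
      (Ub * (E' * W))).trace = 0 := by
    rw [hUbEW, Matrix.transpose_fromRows, Matrix.fromCols_mul_fromRows]
    simp [← Matrix.mul_assoc, hEU]
  have hsum : frobSq (Matrix.fromRows E (0 : Matrix (Fin p) (Fin n) ℝ) + Ub * (E' * W)) =
      frobSq E + frobSq E' := by
    rw [frobSq_add_of_cross _ _ hcross, frobSq_fromRows, frobSq_zero, add_zero,
      frobSq_mul_left _ _ hUb, frobSq_mul_right _ _ hW]
  have hbound : frobSq (Matrix.fromRows E (0 : Matrix (Fin p) (Fin n) ℝ) + Ub * (E' * W)) ≤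
      ε ^ 2 * frobSq (Matrix.fromRows A B) := by
    rw [hsum, frobSq_fromRows, mul_add]
    have h1 : frobSq E ≤ ε ^ 2 * frobSq A := by
      have := pow_le_pow_left₀ (frob_nonneg E) hE 2
      rwa [sq_frob, mul_pow, sq_frob] at this
    have h2 : frobSq E' ≤ ε ^ 2 * frobSq B := by
      have := pow_le_pow_left₀ (frob_nonneg E') hE' 2
      rwa [sq_frob, mul_pow, sq_frob] at this
    linarith
  calc frob (Matrix.fromRows E (0 : Matrix (Fin p) (Fin n) ℝ) + Ub * (E' * W))
      = Real.sqrt (frobSq _) := rfl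
    _ ≤ Real.sqrt (ε ^ 2 * frobSq (Matrix.fromRows A B)) := Real.sqrt_le_sqrt hbound
    _ = ε * frob (Matrix.fromRows A B) := by
        rw [Real.sqrt_mul (sq_nonneg ε), Real.sqrt_sq hε]; rfl
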